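/- Let p, m be integers with p ≥ 2 and p + 1 < m < 2p − 1. Then the set 𝒬′ has maximum 1/(p−1) and minimum −1/(p−1); that is, both values lie in 𝒬′, and every element x of 𝒬′ satisfies |x| ≤ 1/(p−1). -/

import Mathlib

/-- The set `𝒜` of integer sequences `(a_k)_{k≥1}` (indexed here by `k : ℕ`, so `a k`
stands for `a_{k+1}`) with `|a_k| ≤ m - 1` and `∑_{k≥1} a_k p^{-k} = 1`. -/
def seqA (p m : ℤ) : Set (ℕ → ℤ) :=
  {a | (∀ k, |a k| ≤ m - 1) ∧ HasSum (fun k => (a k : ℝ) * ((p : ℝ)⁻¹) ^ (k + 1)) 1}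

/-- The set `ℬ` of integer sequences `(b_k)_{k≥1}` with `|b_k| ≤ m - 1` and
`∑_{k≥1} b_k p^{-k} = 0`. -/
def seqB (p m : ℤ) : Set (ℕ → ℤ) :=
  {b | (∀ k, |b k| ≤ m - 1) ∧ HasSum (fun k => (b k : ℝ) * ((p : ℝ)⁻¹) ^ (k + 1)) 0}

/-- `𝒮 = { ∑_{k≥1} a_k q^{-k} : (a_k) ∈ 𝒜 }`. -/
def setS (p q m : ℤ) : Set ℝ :=
  {x | ∃ a ∈ seqA p m, HasSum (fun k => (a k : ℝ) * ((q : ℝ)⁻¹) ^ (k + 1)) x}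

/-- `𝒮' = { ∑_{k≥1} k a_k p^{-k} : (a_k) ∈ 𝒜 }`. -/
def setS' (p m : ℤ) : Set ℝ :=
  {x | ∃ a ∈ seqA p m,
    HasSum (fun k => ((k + 1 : ℕ) : ℝ) * (a k : ℝ) * ((p : ℝ)⁻¹) ^ (k + 1)) x}

/-- `𝒬 = { ∑_{k≥1} b_k q^{-k} : (b_k) ∈ ℬ }`. -/
def setQ (p q m : ℤ) : Set ℝ :=
  {x | ∃ b ∈ seqB p m, HasSum (fun k => (b k : ℝ) * ((q : ℝ)⁻¹) ^ (k + 1)) x}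

/-- `𝒬' = { ∑_{k≥1} k b_k p^{-k} : (b_k) ∈ ℬ }`. -/
def setQ' (p m : ℤ) : Set ℝ :=
  {x | ∃ b ∈ seqB p m,
    HasSum (fun k => ((k + 1 : ℕ) : ℝ) * (b k : ℝ) * ((p : ℝ)⁻¹) ^ (k + 1)) x}


open Finset

lemma abel_id (c : ℕ → ℝ) (n : ℕ) :
    ∑ k ∈ range n, ((k + 1 : ℕ) : ℝ) * c k
      = n * (∑ k ∈ range n, c k) - ∑ j ∈ range n, ∑ k ∈ range j, c k := by
  induction n with
  | zero => simp
  | succ n ih =>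
      rw [sum_range_succ, sum_range_succ (f := fun k => c k),
        sum_range_succ (f := fun j => ∑ k ∈ range j, c k), ih]
      push_cast
      ring


-- key partial-sum bound
lemma partial_bound (p m : ℤ) (hp : 2 ≤ p) (hm1 : p + 1 < m) (hm2 : m < 2 * p - 1)
    (b : ℕ → ℤ) (hb : ∀ k, |b k| ≤ m - 1)
    (h0 : HasSum (fun k => (b k : ℝ) * ((p : ℝ)⁻¹) ^ (k + 1)) 0) (n : ℕ) :
    |∑ k ∈ range n, (b k : ℝ) * ((p : ℝ)⁻¹) ^ (k + 1)| ≤ ((p : ℝ)⁻¹) ^ n := by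
  set P : ℝ := (p : ℝ) with hPdef
  have hP2 : (2 : ℝ) ≤ P := by rw [hPdef]; exact_mod_cast hp
  have hP1 : (1 : ℝ) < P := by linarith
  have hP0 : (0 : ℝ) < P := lt_trans one_pos hP1
  set r : ℝ := P⁻¹ with hrdef
  have hr0 : 0 < r := inv_pos.2 hP0
  have hr1 : r < 1 := inv_lt_one_of_one_lt₀ hP1
  set f : ℕ → ℝ := fun k => (b k : ℝ) * r ^ (k + 1) with hfdef
  have hsum : Summable f := h0.summable
  -- tail equals minus partial sum
  have htail : ∑' i, f (i + n) = -(∑ k ∈ range n, f k) := by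
    have := hsum.sum_add_tsum_nat_add n
    rw [h0.tsum_eq] at this
    linarith
  -- bound on tail
  have hg : HasSum (fun i : ℕ => ((m : ℝ) - 1) * r ^ (n + 1) * r ^ i)
      (((m : ℝ) - 1) * r ^ (n + 1) * (1 - r)⁻¹) :=
    (hasSum_geometric_of_lt_one hr0.le hr1).mul_left _
  have habs : |∑' i, f (i + n)| ≤ ((m : ℝ) - 1) * r ^ (n + 1) * (1 - r)⁻¹ := by
    have h1 : ∀ i, |f (i + n)| ≤ ((m : ℝ) - 1) * r ^ (n + 1) * r ^ i := by
      intro i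
      have : |f (i + n)| = |(b (i + n) : ℝ)| * r ^ (i + n + 1) := by
        rw [hfdef, abs_mul, abs_pow, abs_of_pos hr0]
      rw [this]
      have hb' : |(b (i + n) : ℝ)| ≤ (m : ℝ) - 1 := by
        have := hb (i + n); push_cast [← Int.cast_abs]; exact_mod_cast this
      calc |(b (i + n) : ℝ)| * r ^ (i + n + 1) ≤ ((m : ℝ) - 1) * r ^ (i + n + 1) := by
            apply mul_le_mul_of_nonneg_right hb' (pow_nonneg hr0.le _)
        _ = ((m : ℝ) - 1) * r ^ (n + 1) * r ^ i := by ring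
    have hsf : Summable fun i => f (i + n) := hsum.comp_injective (add_left_injective n)
    have hsa : Summable fun i => |f (i + n)| := hsf.abs
    have habs' : |∑' i, f (i + n)| ≤ ∑' i, |f (i + n)| := by
      rw [abs_le]
      constructor
      · rw [← tsum_neg]
        exact Summable.tsum_le_tsum (fun i => neg_abs_le _) hsa.neg hsf
      · exact Summable.tsum_le_tsum (fun i => le_abs_self _) hsf hsa
    calc |∑' i, f (i + n)| ≤ ∑' i, |f (i + n)| := habs'
      _ ≤ ∑' i, ((m : ℝ) - 1) * r ^ (n + 1) * r ^ i := by
          exact Summable.tsum_le_tsum h1 hsa hg.summable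
      _ = ((m : ℝ) - 1) * r ^ (n + 1) * (1 - r)⁻¹ := hg.tsum_eq
  -- so |S n| < 2 * r ^ n
  have hSlt : |∑ k ∈ range n, f k| < 2 * r ^ n := by
    have h1r : 0 < 1 - r := by linarith
    have hrP : r * P = 1 := inv_mul_cancel₀ (ne_of_gt hP0)
    have hm' : (m : ℝ) < 2 * P - 1 := by
      rw [hPdef]; push_cast; exact_mod_cast hm2
    have h2 : ((m : ℝ) - 1) * r ^ (n + 1) * (1 - r)⁻¹ < 2 * r ^ n := by
      have e : ((m : ℝ) - 1) * r ^ (n + 1) * (1 - r)⁻¹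
          = (((m : ℝ) - 1) * r / (1 - r)) * r ^ n := by
        rw [div_eq_mul_inv]; ring
      rw [e]
      have hlt : ((m : ℝ) - 1) * r / (1 - r) < 2 := by
        rw [div_lt_iff₀ h1r]
        nlinarith [hrP, hm', hP0, hr0]
      exact mul_lt_mul_of_pos_right hlt (pow_pos hr0 n)
    calc |∑ k ∈ range n, f k| = |∑' i, f (i + n)| := by rw [htail, abs_neg]
      _ ≤ _ := habs
      _ < _ := h2
  -- S n = N / P ^ n
  set N : ℤ := ∑ k ∈ range n, b k * p ^ (n - 1 - k) with hNdef
  have hSN : ∑ k ∈ range n, f k = (N : ℝ) / P ^ n := by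
    rw [hNdef, eq_div_iff (by positivity), Finset.sum_mul]
    push_cast
    apply Finset.sum_congr rfl
    intro k hk
    have hk' : k < n := mem_range.1 hk
    have hpow : r ^ (k + 1) * P ^ n = P ^ (n - 1 - k) := by
      rw [hrdef, inv_pow, inv_mul_eq_div, div_eq_iff (by positivity), ← pow_add]
      congr 1; omega
    rw [hfdef]
    calc (b k : ℝ) * r ^ (k + 1) * P ^ n = (b k : ℝ) * (r ^ (k + 1) * P ^ n) := by ring
      _ = (b k : ℝ) * P ^ (n - 1 - k) := by rw [hpow]
  -- N is small
  have hN1 : |N| ≤ 1 := by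
    by_contra hN
    push_neg at hN
    have h2le : (2 : ℤ) ≤ |N| := by omega
    have : (2 : ℝ) * r ^ n ≤ |(N : ℝ)| / P ^ n := by
      rw [le_div_iff₀ (by positivity)]
      have : ((2 : ℝ)) ≤ |(N : ℝ)| := by exact_mod_cast h2le
      calc 2 * r ^ n * P ^ n = 2 := by
            rw [hrdef, inv_pow]; field_simp
        _ ≤ |(N : ℝ)| := this
    rw [hSN, abs_div, abs_of_pos (by positivity : (0:ℝ) < P ^ n)] at hSlt
    linarith
  rw [hSN, abs_div, abs_of_pos (by positivity : (0:ℝ) < P ^ n)]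
  rw [div_le_iff₀ (by positivity)]
  have : (r : ℝ) ^ n * P ^ n = 1 := by
    rw [hrdef, inv_pow]; exact inv_mul_cancel₀ (by positivity)
  rw [this]
  exact_mod_cast hN1

section Main
open Filter Topology

theorem stmt_8 (p m : ℤ) (hp : 2 ≤ p) (hm1 : p + 1 < m) (hm2 : m < 2 * p - 1) :
    (1 : ℝ) / ((p : ℝ) - 1) ∈ setQ' p m ∧
    -((1 : ℝ) / ((p : ℝ) - 1)) ∈ setQ' p m ∧
    ∀ x ∈ setQ' p m, |x| ≤ (1 : ℝ) / ((p : ℝ) - 1) := by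
  set P : ℝ := (p : ℝ) with hPdef
  have hP2 : (2 : ℝ) ≤ P := by rw [hPdef]; exact_mod_cast hp
  have hP1 : (1 : ℝ) < P := by linarith
  have hP0 : (0 : ℝ) < P := by linarith
  have hPm1 : (0 : ℝ) < P - 1 := by linarith
  set r : ℝ := P⁻¹ with hrdef
  have hr0 : 0 < r := inv_pos.2 hP0
  have hr1 : r < 1 := inv_lt_one_of_one_lt₀ hP1
  have h1r : 0 < 1 - r := by linarith
  have hrP : r * P = 1 := inv_mul_cancel₀ (ne_of_gt hP0)
  -- geometric facts
  have hgeo : HasSum (fun k : ℕ => r ^ (k + 1)) (r * (1 - r)⁻¹) := by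
    have := (hasSum_geometric_of_lt_one hr0.le hr1).mul_left r
    convert this using 2 with k
    · rfl
    rw [pow_succ]; ring
  have hgeo' : HasSum (fun k : ℕ => ((k + 1 : ℕ) : ℝ) * r ^ (k + 1)) (r / (1 - r) ^ 2) := by
    have H := hasSum_coe_mul_geometric_of_norm_lt_one
      (show ‖r‖ < 1 by rwa [Real.norm_eq_abs, abs_of_pos hr0])
    have H2 := (hasSum_nat_add_iff' (f := fun n : ℕ => (n : ℝ) * r ^ n) 1).2 H
    simpa using H2
  -- the witness sequence
  set b : ℕ → ℤ := fun k => if k = 0 then -1 else p - 1 with hbdef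
  have hbmem : b ∈ seqB p m := by
    constructor
    · intro k
      rcases k with _ | k
      · simp only [hbdef, if_pos rfl]
        rw [abs_neg, abs_one]; omega
      · simp only [hbdef, if_neg (Nat.succ_ne_zero k)]
        rw [abs_of_nonneg (by omega)]; omega
    · have hfun : (fun k : ℕ => (b k : ℝ) * ((p : ℝ)⁻¹) ^ (k + 1))
          = fun k => (P - 1) * r ^ (k + 1) - (if k = 0 then 1 else 0) := by
        funext k
        rcases k with _ | k
        · simp only [hbdef, if_pos rfl]
          push_cast
          linear_combination -hrP
        · simp only [hbdef, if_neg (Nat.succ_ne_zero k)]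
          push_cast
          ring
      rw [hfun]
      have h1 : HasSum (fun k : ℕ => (P - 1) * r ^ (k + 1)) ((P - 1) * (r * (1 - r)⁻¹)) :=
        hgeo.mul_left _
      have h2 : HasSum (fun k : ℕ => if k = 0 then (1 : ℝ) else 0) 1 := hasSum_ite_eq 0 1
      have h3 := h1.sub h2
      convert h3 using 1
      · rfl
      have hrne : r ≠ 0 := ne_of_gt hr0
      have hPne : P - 1 ≠ 0 := ne_of_gt hPm1
      have e1 : (1 : ℝ) - r = (P - 1) * r := by
        rw [hrdef]; field_simp
      have e2 : r * (1 - r)⁻¹ = (P - 1)⁻¹ := by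
        rw [e1, mul_inv]; field_simp
      rw [e2, mul_inv_cancel₀ hPne]
      norm_num
  -- the weighted sum of b
  have hbQ : HasSum (fun k => ((k + 1 : ℕ) : ℝ) * (b k : ℝ) * ((p : ℝ)⁻¹) ^ (k + 1))
      ((1 : ℝ) / (P - 1)) := by
    have hfun : (fun k : ℕ => ((k + 1 : ℕ) : ℝ) * (b k : ℝ) * ((p : ℝ)⁻¹) ^ (k + 1))
        = fun k => (P - 1) * (((k + 1 : ℕ) : ℝ) * r ^ (k + 1)) - (if k = 0 then 1 else 0) := by
      funext k
      rcases k with _ | k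
      · simp only [hbdef, if_pos rfl]
        push_cast
        linear_combination -hrP
      · simp only [hbdef, if_neg (Nat.succ_ne_zero k)]
        push_cast
        ring
    rw [hfun]
    have h1 := hgeo'.mul_left (P - 1)
    have h2 : HasSum (fun k : ℕ => if k = 0 then (1 : ℝ) else 0) 1 := hasSum_ite_eq 0 1
    have h3 := h1.sub h2
    convert h3 using 1
    · rfl
    have hrne : r ≠ 0 := ne_of_gt hr0
    have hPne : P - 1 ≠ 0 := ne_of_gt hPm1
    have e1 : (1 : ℝ) - r = (P - 1) * r := by
      rw [hrdef]; field_simp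
    have e3 : r / (1 - r) ^ 2 = P / (P - 1) ^ 2 := by
      rw [e1, div_eq_div_iff (pow_pos (mul_pos hPm1 hr0) 2).ne' (pow_pos hPm1 2).ne']
      linear_combination (-(P - 1) ^ 2 * r) * hrP
    rw [e3]
    field_simp
    ring
  refine ⟨⟨b, hbmem, hbQ⟩, ⟨fun k => -(b k), ?_, ?_⟩, ?_⟩
  · constructor
    · intro k; rw [abs_neg]; exact hbmem.1 k
    · have := hbmem.2.neg
      simpa [neg_mul] using this
  · have := hbQ.neg
    convert this using 2 with k
    · rfl
    push_cast
    ring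
  -- the bound
  · intro x hx
    obtain ⟨c, ⟨hc, h0⟩, hX⟩ := hx
    set S : ℕ → ℝ := fun n => ∑ k ∈ range n, (c k : ℝ) * ((p : ℝ)⁻¹) ^ (k + 1) with hSdef
    have hkey : ∀ n, |S n| ≤ r ^ n := fun n => partial_bound p m hp hm1 hm2 c hc h0 n
    have hten := hX.tendsto_sum_nat
    have hid : ∀ n, ∑ k ∈ range n, ((k + 1 : ℕ) : ℝ) * (c k : ℝ) * ((p : ℝ)⁻¹) ^ (k + 1)
        = (n : ℝ) * S n - ∑ j ∈ range n, S j := by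
      intro n
      rw [hSdef]
      rw [← abel_id (fun k => (c k : ℝ) * ((p : ℝ)⁻¹) ^ (k + 1)) n]
      apply Finset.sum_congr rfl
      intro k _
      ring
    have hbnd : ∀ n : ℕ, |∑ k ∈ range n, ((k + 1 : ℕ) : ℝ) * (c k : ℝ) * ((p : ℝ)⁻¹) ^ (k + 1)|
        ≤ (n : ℝ) * r ^ n + r * (1 - r)⁻¹ := by
      intro n
      rw [hid n]
      have hb1 : |(n : ℝ) * S n| ≤ (n : ℝ) * r ^ n := by
        rw [abs_mul, Nat.abs_cast]
        exact mul_le_mul_of_nonneg_left (hkey n) (Nat.cast_nonneg n)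
      have hb2 : |∑ j ∈ range n, S j| ≤ r * (1 - r)⁻¹ := by
        calc |∑ j ∈ range n, S j| ≤ ∑ j ∈ range n, |S j| := Finset.abs_sum_le_sum_abs _ _
          _ ≤ r * (1 - r)⁻¹ := by
            rcases n with _ | n
            · simp; positivity
            · rw [Finset.sum_range_succ']
              have hS0 : |S 0| = 0 := by rw [hSdef]; simp
              rw [hS0, add_zero]
              calc ∑ i ∈ range n, |S (i + 1)| ≤ ∑ i ∈ range n, r ^ (i + 1) :=
                    Finset.sum_le_sum fun i _ => hkey (i + 1)
                _ ≤ r * (1 - r)⁻¹ := by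
                    rw [← hgeo.tsum_eq]
                    exact Summable.sum_le_tsum (range n) (fun i _ => (pow_pos hr0 (i+1)).le)
                      hgeo.summable
      calc |(n : ℝ) * S n - ∑ j ∈ range n, S j| ≤ |(n : ℝ) * S n| + |∑ j ∈ range n, S j| :=
            abs_sub _ _
        _ ≤ (n : ℝ) * r ^ n + r * (1 - r)⁻¹ := add_le_add hb1 hb2
    have hnr : Tendsto (fun n : ℕ => (n : ℝ) * r ^ n) atTop (nhds 0) := by
      have H := hasSum_coe_mul_geometric_of_norm_lt_one
        (show ‖r‖ < 1 by rwa [Real.norm_eq_abs, abs_of_pos hr0])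
      exact H.summable.tendsto_atTop_zero
    have hlim : Tendsto (fun n : ℕ => (n : ℝ) * r ^ n + r * (1 - r)⁻¹) atTop
        (nhds (0 + r * (1 - r)⁻¹)) := hnr.add tendsto_const_nhds
    have hfin : |x| ≤ 0 + r * (1 - r)⁻¹ :=
      le_of_tendsto_of_tendsto' hten.abs hlim hbnd
    have hrne : r ≠ 0 := ne_of_gt hr0
    have hPne : P - 1 ≠ 0 := ne_of_gt hPm1
    have e1 : (1 : ℝ) - r = (P - 1) * r := by rw [hrdef]; field_simp
    have e2 : r * (1 - r)⁻¹ = (P - 1)⁻¹ := by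
      rw [e1, mul_inv]; field_simp
    rw [zero_add, e2] at hfin
    calc |x| ≤ (P - 1)⁻¹ := hfin
      _ = 1 / (P - 1) := (one_div _).symm
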